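/- Let {f_{α,γ}}_{α,γ∈ℤ} ⊆ ℂ[λ,∂] satisfy the structure coefficient equation, and suppose f_{α₀,γ₀} = 0 for some α₀ ≠ 0 and suppose additionally that for every γ ∈ ℤ, f_{α,γ} has the form F_{α,γ}((α+γ+C)λ+α∂) for one-variable polynomials F_{α,γ} and constant C. Then f_{α,γ₀} = 0 for all α ∈ ℤ. -/
import Mathlib


open MvPolynomial

/-- Substitute the two variables of `f ∈ ℂ[λ,∂]` by elements of `ℂ[λ,μ,∂]`. -/
noncomputable def sub2 (f : MvPolynomial (Fin 2) ℂ) (a b : MvPolynomial (Fin 3) ℂ) :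
    MvPolynomial (Fin 3) ℂ :=
  aeval ![a, b] f

/-- The structure coefficient equation of a free intermediate series module over the
Block-type Lie conformal algebra `B`, as an identity in `ℂ[λ,μ,∂]`
(`λ = X 0`, `μ = X 1`, `∂ = X 2`):
`(βλ - αμ) f_{α+β,γ}(λ+μ,∂)
   = f_{β,γ}(μ,∂+λ) f_{α,β+γ}(λ,∂) - f_{α,γ}(λ,∂+μ) f_{β,α+γ}(μ,∂)`. -/
def StructEq (f : ℤ → ℤ → MvPolynomial (Fin 2) ℂ) : Prop :=
  ∀ α β γ : ℤ,
    (C (β : ℂ) * X 0 - C (α : ℂ) * X 1) * sub2 (f (α + β) γ) (X 0 + X 1) (X 2)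
      = sub2 (f β γ) (X 1) (X 2 + X 0) * sub2 (f α (β + γ)) (X 0) (X 2)
        - sub2 (f α γ) (X 0) (X 2 + X 1) * sub2 (f β (α + γ)) (X 1) (X 2)

/-- `g ↦ g(λ+μ, ∂)` is injective. -/
lemma sub2_shift_inj (g : MvPolynomial (Fin 2) ℂ)
    (h : sub2 g (X 0 + X 1) (X 2) = 0) : g = 0 := by
  have h2 := congrArg (aeval ![(X 0 : MvPolynomial (Fin 2) ℂ), 0, X 1]) h
  rw [map_zero, sub2, comp_aeval_apply] at h2
  have hX : (fun i => aeval ![(X 0 : MvPolynomial (Fin 2) ℂ), 0, X 1]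
      (![(X 0 : MvPolynomial (Fin 3) ℂ) + X 1, X 2] i))
      = (X : Fin 2 → MvPolynomial (Fin 2) ℂ) := by
    funext i
    fin_cases i <;> simp
  rwa [hX, aeval_X_left_apply] at h2

/-- Evaluate a substituted one-variable-form polynomial at a point. -/
lemma eval_sub2_form (F : Polynomial ℂ) (u : MvPolynomial (Fin 2) ℂ)
    (A B : MvPolynomial (Fin 3) ℂ) (p : Fin 3 → ℂ) :
    eval p (sub2 (Polynomial.aeval u F) A B)
      = Polynomial.eval (eval p (sub2 u A B)) F := by
  rw [sub2, sub2, ← Polynomial.aeval_algHom_apply, ← MvPolynomial.coe_aeval_eq_eval,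
    RingHom.coe_coe, ← Polynomial.aeval_algHom_apply, Polynomial.coe_aeval_eq_eval]

/-- If the structure coefficients satisfy the structure coefficient equation, each has
the form `f_{α,γ}(λ,∂) = F_{α,γ}((α+γ+C)λ + α∂)`, and `f_{α₀,γ₀} = 0` for some
`α₀ ≠ 0`, then `f_{α,γ₀} = 0` for all `α ∈ ℤ`. -/
theorem vanishing_row (f : ℤ → ℤ → MvPolynomial (Fin 2) ℂ) (hf : StructEq f)
    (Cc : ℂ) (F : ℤ → ℤ → Polynomial ℂ)
    (hform : ∀ α γ : ℤ, f α γ =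
      Polynomial.aeval
        (C ((α : ℂ) + (γ : ℂ) + Cc) * X 0 + C (α : ℂ) * X 1 : MvPolynomial (Fin 2) ℂ)
        (F α γ))
    (α₀ γ₀ : ℤ) (hα₀ : α₀ ≠ 0) (h0 : f α₀ γ₀ = 0) :
    ∀ α : ℤ, f α γ₀ = 0 := by
  intro α
  rcases eq_or_ne α α₀ with rfl | hne
  · exact h0
  set β : ℤ := α - α₀ with hβdef
  have hβ : β ≠ 0 := sub_ne_zero.mpr hne
  have hβC : (β : ℂ) ≠ 0 := Int.cast_ne_zero.mpr hβ
  have hα₀C : (α₀ : ℂ) ≠ 0 := Int.cast_ne_zero.mpr hα₀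
  have hE := hf α₀ β γ₀
  rw [h0] at hE
  have hαβ : α₀ + β = α := by omega
  rw [hαβ] at hE
  have hz : sub2 0 (X 0) (X 2 + X 1) = 0 := map_zero _
  rw [hz, zero_mul, sub_zero] at hE
  -- Pointwise consequence at (0, 0, d):
  have hpt : ∀ d : ℂ, Polynomial.eval ((β : ℂ) * d) (F β γ₀)
      * Polynomial.eval ((α₀ : ℂ) * d) (F α₀ (β + γ₀)) = 0 := by
    intro d
    have := congrArg (eval (![0, 0, d] : Fin 3 → ℂ)) hE
    rw [hform β γ₀, hform α₀ (β + γ₀)] at this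
    simp only [map_mul] at this
    rw [eval_sub2_form, eval_sub2_form] at this
    simp only [map_mul, map_sub, map_add, eval_C, eval_X, sub2, map_zero] at this
    simp only [aeval_X, map_add, map_mul, aeval_C, algebraMap_eq, map_zero] at this
    simp only [eval_add, eval_mul, eval_C, eval_X, Matrix.cons_val_zero,
      Matrix.cons_val_one, Matrix.head_cons, Matrix.cons_val_two, Matrix.tail_cons] at this
    simp only [mul_zero, zero_mul, add_zero, zero_add, sub_self] at this
    exact this.symm
  -- hence one of the two structure polynomials vanishes
  have hone : F β γ₀ = 0 ∨ F α₀ (β + γ₀) = 0 := by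
    have hP : (F β γ₀).comp (Polynomial.C (β : ℂ) * Polynomial.X)
        * (F α₀ (β + γ₀)).comp (Polynomial.C (α₀ : ℂ) * Polynomial.X) = 0 := by
      apply Polynomial.zero_of_eval_zero
      intro x
      simpa [Polynomial.eval_comp] using hpt x
    rcases mul_eq_zero.mp hP with h | h
    · left
      apply Polynomial.zero_of_eval_zero
      intro x
      have := congrArg (Polynomial.eval (x / (β : ℂ))) h
      simpa [Polynomial.eval_comp, mul_div_cancel₀ _ hβC] using this
    · right
      apply Polynomial.zero_of_eval_zero
      intro x
      have := congrArg (Polynomial.eval (x / (α₀ : ℂ))) h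
      simpa [Polynomial.eval_comp, mul_div_cancel₀ _ hα₀C] using this
  -- so the right-hand side of hE is zero
  have hRHS : sub2 (f β γ₀) (X 1) (X 2 + X 0)
      * sub2 (f α₀ (β + γ₀)) (X 0) (X 2) = 0 := by
    rcases hone with h | h
    · rw [hform β γ₀, h]
      simp [sub2]
    · rw [hform α₀ (β + γ₀), h]
      simp [sub2]
  rw [hRHS] at hE
  have hlin : (C (β : ℂ) * X 0 - C (α₀ : ℂ) * X 1 : MvPolynomial (Fin 3) ℂ) ≠ 0 := by
    intro h
    have := congrArg (eval (![0, 1, 0] : Fin 3 → ℂ)) h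
    simp at this
    exact hα₀ this
  have hL : sub2 (f α γ₀) (X 0 + X 1) (X 2) = 0 :=
    (mul_eq_zero.mp hE).resolve_left hlin
  exact sub2_shift_inj _ hL
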